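/- Let p, q be integers with 1 ≤ q ≤ p and let γ be the largest root of x² − px − q. Let n_l and n_{l+1} be consecutive elements of the increasing enumeration of natural numbers with at most m base-(p+1) digits satisfying condition R_{p,q}. Then the elementary m-interval [n_l‾/γ^m, n_{l+1}‾/γ^m) has length γ^(−m) if the last base-(p+1) digit of n_l is strictly less than p, and length q·γ^(−m−1) if the last digit of n_l equals p; equivalently, n_{l+1}‾ − n_l‾ = 1 in the first case and n_{l+1}‾ − n_l‾ = q/γ in the second case. -/

import Mathlib

open Finset

/-- `γ = (p + √(p² + 4q))/2`, the largest root of `x² − px − q`. -/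
noncomputable def gam (p q : ℕ) : ℝ := ((p : ℝ) + Real.sqrt ((p : ℝ) ^ 2 + 4 * q)) / 2

/-- Condition `R_{p,q}` on the base-`(p+1)` digit expansion of `n`: whenever a digit
equals `p`, the digit immediately to its right is strictly less than `q`. -/
def CondR (p q n : ℕ) : Prop :=
  ∀ j : ℕ, (Nat.digits (p + 1) n).getD (j + 1) 0 = p →
    (Nat.digits (p + 1) n).getD j 0 < q

/-- `n‾ = ∑_j d_j γ^j ∈ ℝ`, where `n = (d_{m−1} … d_1 d_0)_{p+1}`. -/
noncomputable def gbar (p q n : ℕ) : ℝ :=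
  ∑ j ∈ Finset.range (Nat.digits (p + 1) n).length,
    ((Nat.digits (p + 1) n).getD j 0 : ℝ) * gam p q ^ j


namespace S17

def dig (p n j : ℕ) : ℕ := n / (p+1)^j % (p+1)

lemma dig_lt (p n j : ℕ) : dig p n j < p + 1 := Nat.mod_lt _ (by omega)

lemma getD_digits (p n j : ℕ) (hp : 1 ≤ p) : (Nat.digits (p + 1) n).getD j 0 = dig p n j := by
  induction j generalizing n with
  | zero =>
    have h2 : 1 < p + 1 := by omega
    rcases Nat.eq_zero_or_pos n with h | h
    · simp [h, dig]
    · rw [Nat.digits_def' h2 h]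
      simp [dig]
  | succ j ih =>
    have h2 : 1 < p + 1 := by omega
    rcases Nat.eq_zero_or_pos n with h | h
    · simp [h, dig]
    · rw [Nat.digits_def' h2 h]
      simp only [List.getD_cons_succ]
      rw [ih]
      unfold dig
      rw [Nat.div_div_eq_div_mul, ← pow_succ']

lemma dig_shift (p n i j : ℕ) : dig p (n / (p+1)^i) j = dig p n (j + i) := by
  unfold dig
  rw [Nat.div_div_eq_div_mul, ← pow_add, Nat.add_comm i j]

lemma dig_shift1 (p n j : ℕ) : dig p (n / (p+1)) j = dig p n (j + 1) := by
  have := dig_shift p n 1 j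
  simpa using this

lemma gam_pos (p q : ℕ) (hp : 1 ≤ p) : 0 < gam p q := by
  have h1 : (1:ℝ) ≤ (p:ℝ) := by exact_mod_cast hp
  have h2 : 0 ≤ Real.sqrt ((p : ℝ) ^ 2 + 4 * q) := Real.sqrt_nonneg _
  unfold gam; linarith

lemma gam_sq (p q : ℕ) : gam p q ^ 2 = p * gam p q + q := by
  have hs : Real.sqrt ((p : ℝ) ^ 2 + 4 * q) ^ 2 = (p : ℝ) ^ 2 + 4 * q :=
    Real.sq_sqrt (by positivity)
  unfold gam
  nlinarith [hs]


lemma condR_iff (p q n : ℕ) (hp : 1 ≤ p) :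
    CondR p q n ↔ ∀ j, dig p n (j+1) = p → dig p n j < q := by
  unfold CondR
  simp only [getD_digits _ _ _ hp]

lemma gbar_zero (p q : ℕ) : gbar p q 0 = 0 := by simp [gbar]

lemma gbar_rec (p q n : ℕ) (hp : 1 ≤ p) (hn : 0 < n) :
    gbar p q n = (n % (p+1) : ℕ) + gam p q * gbar p q (n / (p+1)) := by
  have h2 : 1 < p + 1 := by omega
  conv_lhs => rw [gbar, Nat.digits_def' h2 hn]
  rw [List.length_cons, Finset.sum_range_succ']
  simp only [List.getD_cons_succ, List.getD_cons_zero, pow_zero, mul_one, pow_succ']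
  rw [add_comm]
  congr 1
  rw [gbar, Finset.mul_sum]
  apply Finset.sum_congr rfl
  intro j _
  ring

noncomputable def gT (p q n k : ℕ) : ℝ :=
  ∑ j ∈ Finset.range k, (dig p n j : ℝ) * gam p q ^ j

lemma gT_zero (p q n : ℕ) : gT p q n 0 = 0 := by simp [gT]

lemma gT_of_zero (p q k : ℕ) : gT p q 0 k = 0 := by simp [gT, dig]

lemma gT_succ' (p q n k : ℕ) :
    gT p q n (k+1) = (dig p n 0 : ℝ) + gam p q * gT p q (n / (p+1)) k := by
  rw [gT, Finset.sum_range_succ']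
  simp only [pow_zero, mul_one]
  rw [add_comm]
  congr 1
  rw [gT, Finset.mul_sum]
  apply Finset.sum_congr rfl
  intro j _
  rw [dig_shift1]
  simp only [pow_succ']
  ring


lemma gbar_split (p q : ℕ) (hp : 1 ≤ p) :
    ∀ k n, gbar p q n = gam p q ^ k * gbar p q (n / (p+1)^k) + gT p q n k := by
  intro k
  induction k with
  | zero => intro n; simp [gT_zero]
  | succ k ih =>
    intro n
    rcases Nat.eq_zero_or_pos n with h | h
    · simp [h, gbar_zero, gT_of_zero, Nat.zero_div]
    · rw [gbar_rec p q n hp h, ih (n / (p+1)), gT_succ']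
      have hd : (dig p n 0 : ℝ) = (n % (p+1) : ℕ) := by simp [dig]
      rw [hd]
      have hdd : n / (p+1) / (p+1)^k = n / (p+1)^(k+1) := by
        rw [Nat.div_div_eq_div_mul, ← pow_succ']
      rw [hdd]
      ring

lemma gbar_mul_pow (p q : ℕ) (hp : 1 ≤ p) :
    ∀ k c, gbar p q (c * (p+1)^k) = gam p q ^ k * gbar p q c := by
  intro k
  induction k with
  | zero => intro c; simp
  | succ k ih =>
    intro c
    rcases Nat.eq_zero_or_pos c with h | h
    · simp [h, gbar_zero]
    · have hpos : 0 < c * (p+1)^(k+1) := by positivity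
      rw [gbar_rec p q _ hp hpos]
      have h1 : c * (p+1)^(k+1) % (p+1) = 0 := by
        rw [pow_succ]
        rw [← Nat.mul_assoc]
        exact Nat.mul_mod_left _ _
      have h2 : c * (p+1)^(k+1) / (p+1) = c * (p+1)^k := by
        rw [pow_succ, ← Nat.mul_assoc]
        exact Nat.mul_div_cancel _ (by omega)
      rw [h1, h2, ih c]
      push_cast
      ring

lemma succ_mod_div (p a : ℕ) (h : a % (p+1) < p) :
    (a+1) % (p+1) = a % (p+1) + 1 ∧ (a+1) / (p+1) = a / (p+1) := by
  have hd := Nat.div_add_mod a (p+1)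
  have he : a + 1 = (a % (p+1) + 1) + (p+1) * (a / (p+1)) := by omega
  constructor
  · rw [he, Nat.add_mul_mod_self_left, Nat.mod_eq_of_lt (by omega)]
  · rw [he, Nat.add_mul_div_left _ _ (by omega : 0 < p+1),
      Nat.div_eq_of_lt (by omega)]
    omega

lemma gbar_succ (p q a : ℕ) (hp : 1 ≤ p) (h : a % (p+1) < p) :
    gbar p q (a+1) = gbar p q a + 1 := by
  obtain ⟨h1, h2⟩ := succ_mod_div p a h
  rw [gbar_rec p q (a+1) hp (by omega), h1, h2]
  rcases Nat.eq_zero_or_pos a with h0 | h0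
  · simp [h0, gbar_zero]
  · rw [gbar_rec p q a hp h0]
    push_cast
    ring


lemma core (p q : ℕ) (hq : 1 ≤ q) (hpq : q ≤ p) :
    ∀ k n, (∀ j, dig p n (j+1) = p → dig p n j < q) →
      (∀ j, j < k → ¬ (dig p n j < p ∧ (dig p n (j+1) = p → dig p n j + 1 < q))) →
      (dig p n k < p ∧ (dig p n (k+1) = p → dig p n k + 1 < q)) →
      gam p q ^ k - gT p q n k = if dig p n 0 = p then (q:ℝ) / gam p q else 1 := by
  have hp : 1 ≤ p := le_trans hq hpq
  have hg : gam p q ^ 2 = p * gam p q + q := gam_sq p q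
  have hg0 : gam p q ≠ 0 := ne_of_gt (gam_pos p q hp)
  have hkey : (q:ℝ) / gam p q = gam p q - p := by
    field_simp
    nlinarith [hg]
  intro k
  induction k using Nat.strong_induction_on with
  | _ k ih =>
    rcases k with _ | (_ | k)
    · intro n hval hb hf
      rw [gT_zero, if_neg (Nat.ne_of_lt hf.1)]
      simp
    · intro n hval hb hf
      have hb0 := hb 0 (by omega)
      push_neg at hb0
      have hle := dig_lt p n 0
      have hd0 : dig p n 0 = p := by
        by_contra h
        obtain ⟨h2, _⟩ := hb0 (by omega)
        exact absurd h2 (Nat.ne_of_lt hf.1)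
      rw [if_pos hd0]
      have hgt : gT p q n 1 = (p:ℝ) := by simp [gT, hd0]
      rw [hgt, pow_one, hkey]
    · intro n hval hb hf
      set n2 := n / (p+1)^2 with hn2
      have hsh : ∀ j, dig p n2 j = dig p n (j+2) := fun j => dig_shift p n 2 j
      have hval2 : ∀ j, dig p n2 (j+1) = p → dig p n2 j < q := by
        intro j hj
        rw [hsh] at hj ⊢
        have hj' : dig p n (j+2+1) = p := by
          have e : j+2+1 = j+1+2 := by omega
          rw [e]; exact hj
        exact hval (j+2) hj'
      have hb2 : ∀ j, j < k → ¬ (dig p n2 j < p ∧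
          (dig p n2 (j+1) = p → dig p n2 j + 1 < q)) := by
        intro j hj
        rw [hsh, hsh]
        have hb' := hb (j+2) (by omega)
        have e : j+2+1 = j+1+2 := by omega
        rw [e] at hb'
        exact hb'
      have hf2 : dig p n2 k < p ∧
          (dig p n2 (k+1) = p → dig p n2 k + 1 < q) := by
        rw [hsh, hsh]
        have e1 : k+2 = k+1+1 := by omega
        have e2 : k+1+2 = k+1+1+1 := by omega
        rw [e1, e2]
        exact hf
      have IH := ih k (by omega) n2 hval2 hb2 hf2
      have hgT : gT p q n (k+1+1) = (dig p n 0 : ℝ) + (dig p n 1 : ℝ) * gam p q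
          + gam p q ^ 2 * gT p q n2 k := by
        rw [gT_succ', gT_succ']
        have e1 : dig p (n/(p+1)) 0 = dig p n 1 := dig_shift1 p n 0
        have e2 : n / (p+1) / (p+1) = n2 := by
          rw [Nat.div_div_eq_div_mul, hn2, pow_two]
        rw [e1, e2]
        ring
      have hd0le := dig_lt p n 0
      have hd1le := dig_lt p n 1
      have hb0 := hb 0 (by omega)
      have hb1 := hb 1 (by omega)
      push_neg at hb0 hb1
      rw [hsh 0] at IH
      have epow : gam p q ^ (k+1+1) = gam p q ^ k * gam p q ^ 2 := by
        rw [← pow_add]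
      by_cases hd0 : dig p n 0 = p
      · have hd1lt : dig p n 1 < p := by
          rcases Nat.lt_or_ge (dig p n 1) p with h | h
          · exact h
          · have h' : dig p n (0+1) = p := by
              have : dig p n 1 = p := by omega
              simpa using this
            have := hval 0 (by simpa using h')
            omega
        obtain ⟨h2p, h2q⟩ := hb1 hd1lt
        have h2p' : dig p n 2 = p := by
          have e : (1:ℕ)+1 = 2 := rfl
          rw [e] at h2p
          exact h2p
        have hd1q : dig p n 1 + 1 = q := by
          have := hval 1 h2p
          omega
        rw [if_pos hd0]
        rw [if_pos (by simpa using h2p' : dig p n (0+2) = p), hkey] at IH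
        rw [hkey, hgT, epow]
        have hc0 : (dig p n 0 : ℝ) = p := by exact_mod_cast hd0
        have hc1 : (dig p n 1 : ℝ) = q - 1 := by
          have h' : ((dig p n 1 : ℕ) : ℝ) + 1 = q := by exact_mod_cast hd1q
          linarith
        rw [hc0, hc1]
        linear_combination (gam p q ^ 2) * IH + gam p q * hg
      · have hd0lt : dig p n 0 < p := by omega
        obtain ⟨h1p, h1q⟩ := hb0 hd0lt
        have hd0q : dig p n 0 + 1 = q := by
          have := hval 0 h1p
          omega
        have hd2ne : dig p n (0+2) ≠ p := by
          intro h
          have h' : dig p n (1+1) = p := by simpa using h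
          have := hval 1 h'
          have hp1 : dig p n (0+1) = p := h1p
          have : dig p n 1 < q := hval 1 h'
          simp only [Nat.zero_add] at hp1
          omega
        rw [if_neg hd0]
        rw [if_neg hd2ne] at IH
        rw [hgT, epow]
        have hc0 : (dig p n 0 : ℝ) = q - 1 := by
          have h' : ((dig p n 0 : ℕ) : ℝ) + 1 = q := by exact_mod_cast hd0q
          linarith
        have hc1 : (dig p n 1 : ℝ) = p := by
          have : dig p n 1 = p := by simpa using h1p
          exact_mod_cast this
        rw [hc0, hc1]
        linear_combination (gam p q ^ 2) * IH + hg

lemma sdiv (p n k j : ℕ) (hj : j ≤ k) :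
    (n / (p+1)^k + 1) * (p+1)^k / (p+1)^j = (n / (p+1)^k + 1) * (p+1)^(k-j) := by
  have e : (p+1)^k = (p+1)^(k-j) * (p+1)^j := by
    rw [← pow_add]
    congr 1
    omega
  rw [e, ← Nat.mul_assoc]
  exact Nat.mul_div_cancel _ (by positivity)

lemma dig_succ_lt (p n k j : ℕ) (hj : j < k) :
    dig p ((n / (p+1)^k + 1) * (p+1)^k) j = 0 := by
  unfold dig
  rw [sdiv p n k j (le_of_lt hj)]
  have e : (p+1)^(k-j) = (p+1)^(k-j-1) * (p+1) := by
    rw [← pow_succ]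
    congr 1
    omega
  rw [e, ← Nat.mul_assoc]
  exact Nat.mul_mod_left _ _

lemma dig_succ_eq (p n k : ℕ) (h : dig p n k < p) :
    dig p ((n / (p+1)^k + 1) * (p+1)^k) k = dig p n k + 1 := by
  unfold dig
  rw [sdiv p n k k le_rfl, Nat.sub_self, pow_zero, Nat.mul_one]
  exact (succ_mod_div p _ h).1

lemma dig_succ_gt (p n k j : ℕ) (h : dig p n k < p) (hj : k < j) :
    dig p ((n / (p+1)^k + 1) * (p+1)^k) j = dig p n j := by
  unfold dig
  have e1 : (p+1)^j = (p+1)^k * (p+1)^(j-k) := by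
    rw [← pow_add]
    congr 1
    omega
  rw [e1, ← Nat.div_div_eq_div_mul, Nat.mul_div_cancel _ (show 0 < (p+1)^k by positivity)]
  have e2 : (p+1)^(j-k) = (p+1) * (p+1)^(j-k-1) := by
    rw [← pow_succ']
    congr 1
    omega
  have h3 : (n / (p+1)^k + 1) / (p+1)^(j-k) = n / (p+1)^k / (p+1)^(j-k) := by
    rw [e2, ← Nat.div_div_eq_div_mul, ← Nat.div_div_eq_div_mul,
      (succ_mod_div p (n / (p+1)^k) h).2]
  rw [h3, Nat.div_div_eq_div_mul, ← e1]

lemma succ_valid (p q n k : ℕ) (hq : 1 ≤ q) (hpq : q ≤ p)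
    (hfree : dig p n k < p ∧ (dig p n (k+1) = p → dig p n k + 1 < q))
    (hval : ∀ j, dig p n (j+1) = p → dig p n j < q) :
    ∀ j, dig p ((n / (p+1)^k + 1) * (p+1)^k) (j+1) = p →
      dig p ((n / (p+1)^k + 1) * (p+1)^k) j < q := by
  intro j hj
  rcases lt_trichotomy (j+1) k with h | h | h
  · rw [dig_succ_lt p n k (j+1) h] at hj
    omega
  · rw [dig_succ_lt p n k j (by omega)]
    omega
  · rcases eq_or_lt_of_le (Nat.succ_le_of_lt h : k + 1 ≤ j + 1) with hk | hk
    · have hkj : k = j := by omega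
      subst hkj
      rw [dig_succ_gt p n k (k+1) hfree.1 (by omega)] at hj
      rw [dig_succ_eq p n k hfree.1]
      exact hfree.2 hj
    · have hkj : k < j := by omega
      rw [dig_succ_gt p n k (j+1) hfree.1 (by omega)] at hj
      rw [dig_succ_gt p n k j hfree.1 hkj]
      exact hval j hj

lemma min_lemma (p q n k : ℕ) (hq : 1 ≤ q) (hpq : q ≤ p)
    (hval : ∀ j, dig p n (j+1) = p → dig p n j < q)
    (hb : ∀ j, j < k → ¬ (dig p n j < p ∧ (dig p n (j+1) = p → dig p n j + 1 < q)))
    (x : ℕ) (hxval : ∀ j, dig p x (j+1) = p → dig p x j < q)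
    (hnx : n < x) : (n / (p+1)^k + 1) * (p+1)^k ≤ x := by
  by_contra hcon
  push_neg at hcon
  have hx : x / (p+1)^k < n / (p+1)^k + 1 :=
    (Nat.div_lt_iff_lt_mul (by positivity)).mpr hcon
  have key : ∀ i, i ≤ k → x / (p+1)^(k-i) ≤ n / (p+1)^(k-i) := by
    intro i
    induction i with
    | zero =>
      intro _
      simpa using Nat.lt_succ_iff.mp hx
    | succ i ihi =>
      intro hik
      have h1 := ihi (by omega)
      have hj : k - i = (k - (i+1)) + 1 := by omega
      set j := k - (i+1) with hjdef
      rw [hj] at h1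
      have hjk : j < k := by omega
      have expx : x / (p+1)^j = (p+1) * (x / (p+1)^(j+1)) + dig p x j := by
        have h := Nat.div_add_mod (x / (p+1)^j) (p+1)
        have e : x / (p+1)^j / (p+1) = x / (p+1)^(j+1) := by
          rw [Nat.div_div_eq_div_mul, ← pow_succ]
        rw [e] at h
        unfold dig
        omega
      have expn : n / (p+1)^j = (p+1) * (n / (p+1)^(j+1)) + dig p n j := by
        have h := Nat.div_add_mod (n / (p+1)^j) (p+1)
        have e : n / (p+1)^j / (p+1) = n / (p+1)^(j+1) := by
          rw [Nat.div_div_eq_div_mul, ← pow_succ]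
        rw [e] at h
        unfold dig
        omega
      rcases lt_or_eq_of_le h1 with hlt | heq
      · have hdx : dig p x j < p + 1 := dig_lt p x j
        refine le_of_lt ?_
        calc x / (p+1)^j = (p+1) * (x / (p+1)^(j+1)) + dig p x j := expx
          _ < (p+1) * (x / (p+1)^(j+1)) + (p+1) := Nat.add_lt_add_left hdx _
          _ = (p+1) * (x / (p+1)^(j+1) + 1) := by ring
          _ ≤ (p+1) * (n / (p+1)^(j+1)) := Nat.mul_le_mul_left _ hlt
          _ ≤ (p+1) * (n / (p+1)^(j+1)) + dig p n j := Nat.le_add_right _ _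
          _ = n / (p+1)^j := expn.symm
      · have hdig : dig p x j ≤ dig p n j := by
          have hbj := hb j hjk
          push_neg at hbj
          have hle := dig_lt p n j
          by_cases hp' : dig p n j = p
          · have := dig_lt p x j
            omega
          · obtain ⟨h1p, h1q⟩ := hbj (by omega)
            have hxj1 : dig p x (j+1) = dig p n (j+1) := by
              unfold dig
              rw [heq]
            have hxq : dig p x j < q := hxval j (by rw [hxj1]; exact h1p)
            have hnq : dig p n j < q := hval j h1p
            omega
        rw [expx, expn, heq]
        exact Nat.add_le_add_left hdig _
  have hfin := key k le_rfl
  simp at hfin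
  omega

end S17

/-- Let `1 ≤ q ≤ p` and let `n, n'` be consecutive elements of the
increasing enumeration of natural numbers with at most `m` base-`(p+1)` digits
satisfying condition `R_{p,q}`. Then the elementary `m`-interval `[n‾/γ^m, n'‾/γ^m)` has
length `γ^(−m)` (i.e. `n'‾ − n‾ = 1`) if the last base-`(p+1)` digit of `n` is `< p`,
and length `q·γ^(−m−1)` (i.e. `n'‾ − n‾ = q/γ`) if the last digit of `n` equals `p`. -/
theorem statement17 (p q : ℕ) (hq : 1 ≤ q) (hpq : q ≤ p) (m n n' : ℕ)
    (hn : CondR p q n ∧ n < (p + 1) ^ m)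
    (hn' : CondR p q n' ∧ n' < (p + 1) ^ m)
    (hlt : n < n')
    (hcons : ∀ x : ℕ, n < x → x < n' → ¬(CondR p q x ∧ x < (p + 1) ^ m)) :
    (n % (p + 1) < p →
      gbar p q n' - gbar p q n = 1 ∧
      gbar p q n' / gam p q ^ m - gbar p q n / gam p q ^ m = gam p q ^ (-(m : ℤ))) ∧
    (n % (p + 1) = p →
      gbar p q n' - gbar p q n = (q : ℝ) / gam p q ∧
      gbar p q n' / gam p q ^ m - gbar p q n / gam p q ^ m =
        (q : ℝ) * gam p q ^ (-(m : ℤ) - 1)) := by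
  classical
  have hp : 1 ≤ p := le_trans hq hpq
  have hg0 : gam p q ≠ 0 := ne_of_gt (S17.gam_pos p q hp)
  obtain ⟨hnR, hnm⟩ := hn
  obtain ⟨hn'R, hn'm⟩ := hn'
  have hval := (S17.condR_iff p q n hp).mp hnR
  have hval' := (S17.condR_iff p q n' hp).mp hn'R
  have hex : ∃ j, S17.dig p n j < p ∧
      (S17.dig p n (j+1) = p → S17.dig p n j + 1 < q) := by
    have hbig : ∀ i, n < i → n < (p+1)^i := by
      intro i hi
      calc n < 2^i := lt_of_lt_of_le (Nat.lt_two_pow_self (n := n)) (Nat.pow_le_pow_right (by omega) (le_of_lt hi))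
        _ ≤ (p+1)^i := Nat.pow_le_pow_left (by omega) _
    have hd1 : S17.dig p n (n+1) = 0 := by
      unfold S17.dig
      rw [Nat.div_eq_of_lt (hbig (n+1) (by omega))]
      simp
    have hd2 : S17.dig p n (n+1+1) = 0 := by
      unfold S17.dig
      rw [Nat.div_eq_of_lt (hbig (n+1+1) (by omega))]
      simp
    exact ⟨n+1, by rw [hd1]; omega, fun h => by rw [hd2] at h; omega⟩
  set k := Nat.find hex with hk
  have hfree := Nat.find_spec hex
  have hb : ∀ j, j < k → ¬ (S17.dig p n j < p ∧
      (S17.dig p n (j+1) = p → S17.dig p n j + 1 < q)) :=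
    fun j hj => Nat.find_min hex hj
  set s := (n / (p+1)^k + 1) * (p+1)^k with hs
  have hns : n < s := by
    have h1 := Nat.div_add_mod n ((p+1)^k)
    have h2 : n % (p+1)^k < (p+1)^k := Nat.mod_lt _ (by positivity)
    calc n = (p+1)^k * (n / (p+1)^k) + n % (p+1)^k := h1.symm
      _ < (p+1)^k * (n / (p+1)^k) + (p+1)^k := Nat.add_lt_add_left h2 _
      _ = (n / (p+1)^k + 1) * (p+1)^k := by ring
  have hsle : s ≤ n' := S17.min_lemma p q n k hq hpq hval hb n' hval' hlt
  have hseq : n' = s := by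
    rcases lt_or_eq_of_le hsle with h | h
    · exfalso
      apply hcons s hns h
      exact ⟨(S17.condR_iff p q s hp).mpr (S17.succ_valid p q n k hq hpq hfree hval),
        lt_trans h hn'm⟩
    · exact h.symm
  have hdig_k : S17.dig p n k < p := hfree.1
  have hsplit := S17.gbar_split p q hp k n
  have hsmul : gbar p q s = gam p q ^ k * gbar p q (n / (p+1)^k + 1) :=
    S17.gbar_mul_pow p q hp k _
  have hstep : gbar p q (n/(p+1)^k + 1) = gbar p q (n/(p+1)^k) + 1 :=
    S17.gbar_succ p q _ hp hdig_k
  have hdiff : gbar p q n' - gbar p q n = gam p q ^ k - S17.gT p q n k := by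
    rw [hseq, hsmul, hstep, hsplit]
    ring
  have hcore := S17.core p q hq hpq k n hval hb hfree
  have hd00 : S17.dig p n 0 = n % (p+1) := by simp [S17.dig]
  rw [hd00] at hcore
  constructor
  · intro hlast
    have hone : gbar p q n' - gbar p q n = 1 := by
      rw [hdiff, hcore, if_neg (Nat.ne_of_lt hlast)]
    refine ⟨hone, ?_⟩
    rw [div_sub_div_same, hone, zpow_neg, zpow_natCast]
    exact one_div _
  · intro hlast
    have hone : gbar p q n' - gbar p q n = (q:ℝ) / gam p q := by
      rw [hdiff, hcore, if_pos hlast]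
    refine ⟨hone, ?_⟩
    rw [div_sub_div_same, hone]
    have e : (-(m:ℤ) - 1) = -((m+1 : ℕ) : ℤ) := by push_cast; ring
    rw [e, zpow_neg, zpow_natCast, pow_succ]
    have hpm : gam p q ^ m ≠ 0 := pow_ne_zero _ hg0
    field_simp
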